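/- For all integers 0 ≤ i ≤ d and 0 ≤ j ≤ e, the polynomial identity qbase(i,x,d)_q · qbase(j,x,e)_q = Σ_{ℓ=0}^{d+e} q^{(ℓ-e-i)(ℓ-d-j)} qbinom(d+j-i, ℓ-i)_q · qbinom(e+i-j, ℓ-j)_q · qbase(ℓ, x, d+e)_q holds in ℚ(q)[x]. -/

import Mathlib

open Polynomial Finset

noncomputable section

/-- The field ℚ(q) of rational functions. -/
abbrev K : Type := RatFunc ℚ

/-- The variable q of ℚ(q). -/
def qq : K := RatFunc.X

/-- The q-integer [n]_t = (t^n - 1)/(t - 1), for n ∈ ℤ. -/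
def qint (t : K) (n : ℤ) : K := (t ^ n - 1) / (t - 1)

/-- The q-factorial [n]!_t. -/
def qfact (t : K) (n : ℕ) : K := ∏ i ∈ range n, qint t (i + 1)

/-- The generalized q-binomial qbinom(m, n)_t = [m]_t [m-1]_t ⋯ [m-n+1]_t / [n]!_t. -/
def qbinom (t : K) (m : ℤ) (n : ℕ) : K := (∏ i ∈ range n, qint t (m - i)) / qfact t n

/-- The q-binomial with the vanishing convention: 0 unless 0 ≤ n ≤ m. -/
def qbinomv (t : K) (m n : ℤ) : K :=
  if 0 ≤ n ∧ n ≤ m then (∏ i ∈ range n.toNat, qint t (m - i)) / qfact t n.toNat else 0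

/-- The polynomial [n, x]_t = [n]_t + t^n x. -/
def qb (t : K) (n : ℤ) : Polynomial K := C (qint t n) + C (t ^ n) * X

/-- The polynomial qbase(m, x, n)_t = [m-n+1,x]_t ⋯ [m,x]_t / [n]!_t. -/
def qbase (t : K) (m : ℤ) (n : ℕ) : Polynomial K :=
  (∏ i ∈ range n, qb t (m - n + 1 + i)) * C (qfact t n)⁻¹

lemma qq_ne_zero : qq ≠ 0 := RatFunc.X_ne_zero

lemma qq_pow_ne_one_nat (k : ℕ) (hk : k ≠ 0) : qq ^ (k : ℕ) ≠ (1 : K) := by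
  intro h
  have : (Polynomial.X : ℚ[X]) ^ k = 1 := by
    apply RatFunc.algebraMap_injective ℚ
    rw [qq, RatFunc.X] at h
    rw [map_pow, map_one, h]
  have := congrArg (Polynomial.eval 0) this
  simp [Polynomial.eval_pow, zero_pow hk] at this

lemma qq_zpow_ne_one (n : ℤ) (hn : n ≠ 0) : qq ^ n ≠ (1 : K) := by
  rcases lt_or_gt_of_ne hn with h | h
  · intro hc
    have h2 : qq ^ (-n) = (1 : K) := by
      rw [zpow_neg, hc, inv_one]
    lift -n to ℕ using (by omega) with k hk
    rw [zpow_natCast] at h2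
    exact qq_pow_ne_one_nat k (by omega) h2
  · intro hc
    lift n to ℕ using (by omega) with k
    rw [zpow_natCast] at hc
    exact qq_pow_ne_one_nat k (by omega) hc

lemma qq_sub_one_ne : qq - 1 ≠ (0 : K) := by
  have := qq_zpow_ne_one 1 one_ne_zero
  rw [zpow_one] at this
  exact sub_ne_zero.mpr this

lemma qint_ne_zero {n : ℤ} (hn : n ≠ 0) : qint qq n ≠ 0 := by
  apply div_ne_zero _ qq_sub_one_ne
  exact sub_ne_zero.mpr (qq_zpow_ne_one n hn)

lemma qint_zero : qint qq 0 = 0 := by simp [qint]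

lemma qint_add (a b : ℤ) : qint qq (a + b) = qint qq a + qq ^ a * qint qq b := by
  rw [qint, qint, qint, zpow_add₀ qq_ne_zero, ← mul_div_assoc, ← add_div]
  congr 1
  ring

lemma qfact_ne_zero (n : ℕ) : qfact qq n ≠ 0 := by
  rw [qfact]
  exact Finset.prod_ne_zero_iff.mpr fun i _ => qint_ne_zero (by omega)

lemma qbinomv_of_neg {m n : ℤ} (h : n < 0) : qbinomv qq m n = 0 := by
  rw [qbinomv, if_neg]; omega

lemma qbinomv_of_gt {m n : ℤ} (h : m < n) : qbinomv qq m n = 0 := by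
  rw [qbinomv, if_neg]; omega

lemma qbinomv_eq (m : ℤ) (k : ℕ) (h : (k : ℤ) ≤ m) :
    qbinomv qq m k = (∏ t ∈ range k, qint qq (m - t)) / qfact qq k := by
  rw [qbinomv, if_pos ⟨Int.natCast_nonneg k, h⟩, Int.toNat_natCast]

lemma qbinomv_zero {m : ℤ} (h : 0 ≤ m) : qbinomv qq m 0 = 1 := by
  have := qbinomv_eq m 0 (by omega)
  simpa [qfact] using this

lemma prod_qint_self (k : ℕ) : ∏ t ∈ range k, qint qq ((k : ℤ) - t) = qfact qq k := by
  induction k with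
  | zero => simp [qfact]
  | succ n ih =>
    rw [Finset.prod_range_succ', qfact, Finset.prod_range_succ, ← qfact, ← ih]
    congr 1
    · apply Finset.prod_congr rfl
      intro t _
      congr 1
      push_cast
      ring

lemma qbinomv_self (k : ℕ) : qbinomv qq (k : ℤ) (k : ℤ) = 1 := by
  rw [qbinomv_eq _ k le_rfl, prod_qint_self]
  exact div_self (qfact_ne_zero k)

lemma qbinomv_rec (m : ℤ) (hm : 0 ≤ m) (n : ℤ) :
    qint qq n * qbinomv qq m n = qint qq (m - n + 1) * qbinomv qq m (n - 1) := by
  rcases lt_trichotomy n 0 with h | h | h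
  · rw [qbinomv_of_neg h, qbinomv_of_neg (show n - 1 < 0 by omega)]; ring
  · subst h
    rw [qint_zero, qbinomv_of_neg (show (0:ℤ) - 1 < 0 by omega)]; ring
  · obtain ⟨k, rfl⟩ : ∃ k : ℕ, n = (k : ℤ) + 1 := ⟨(n - 1).toNat, by omega⟩
    rcases le_or_gt ((k : ℤ) + 1) m with hle | hgt
    · have h1 : ((k : ℤ) + 1) = ((k + 1 : ℕ) : ℤ) := by push_cast; ring
      have h2 : ((k : ℤ) + 1 - 1) = ((k : ℕ) : ℤ) := by push_cast; ring
      rw [h2, h1, qbinomv_eq m (k + 1) (by omega), qbinomv_eq m k (by omega)]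
      rw [Finset.prod_range_succ, qfact, Finset.prod_range_succ, ← qfact]
      have e1 : qint qq (m - ((k + 1 : ℕ) : ℤ) + 1) = qint qq (m - k) := by
        congr 1; push_cast; ring
      have e2 : qint qq ((k : ℤ) + 1) ≠ 0 := qint_ne_zero (by omega)
      rw [e1]
      field_simp [e2]
      push_cast
      ring
    · rw [qbinomv_of_gt (show m < (k:ℤ) + 1 by omega)]
      rcases eq_or_lt_of_le (show m ≤ (k : ℤ) by omega) with heq | hlt
      · have h5 : m - ((k : ℤ) + 1) + 1 = 0 := by omega
        rw [h5, qint_zero]; ring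
      · rw [qbinomv_of_gt (show m < (k:ℤ) + 1 - 1 by omega)]; ring

lemma qbinomv_P1 (m : ℤ) (hm : 0 ≤ m) (n : ℤ) :
    qint qq (m + 1 - n) * qbinomv qq (m + 1) n = qint qq (m + 1) * qbinomv qq m n := by
  rcases lt_trichotomy n 0 with h | h | h
  · rw [qbinomv_of_neg h, qbinomv_of_neg h]; ring
  · subst h
    rw [qbinomv_zero (by omega), qbinomv_zero hm]; ring
  · rcases le_or_gt n m with hle | hgt
    · obtain ⟨k, rfl⟩ : ∃ k : ℕ, n = (k : ℤ) + 1 := ⟨(n - 1).toNat, by omega⟩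
      have h1 : ((k : ℤ) + 1) = ((k + 1 : ℕ) : ℤ) := by push_cast; ring
      rw [h1, qbinomv_eq (m + 1) (k + 1) (by omega), qbinomv_eq m (k + 1) (by omega)]
      rw [Finset.prod_range_succ' (fun t => qint qq (m + 1 - t)) k,
        Finset.prod_range_succ (fun t => qint qq (m - t)) k]
      have e1 : ∏ t ∈ range k, qint qq (m + 1 - ((t : ℕ) + 1 : ℕ)) =
          ∏ t ∈ range k, qint qq (m - t) := by
        apply Finset.prod_congr rfl; intro t _; congr 1; push_cast; ring
      rw [e1]
      have e2 : qint qq (m + 1 - ((0 : ℕ) : ℤ)) = qint qq (m + 1) := by norm_num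
      have e3 : qint qq (m + 1 - ((k + 1 : ℕ) : ℤ)) = qint qq (m - k) := by
        congr 1; push_cast; ring
      rw [e2]
      have : m + 1 - ((k + 1 : ℕ) : ℤ) = m - k := by push_cast; ring
      rw [this]
      field_simp
    · rcases eq_or_lt_of_le (show m + 1 ≤ n by omega) with heq | hlt
      · rw [← heq]
        have h5 : m + 1 - (m + 1) = 0 := by ring
        rw [h5, qint_zero, qbinomv_of_gt (show m < m + 1 by omega), zero_mul, mul_zero]
      · rw [qbinomv_of_gt (show m < n by omega), qbinomv_of_gt (show m + 1 < n by omega)]; ring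

lemma qbinomv_pascal (m : ℤ) (hm : 0 ≤ m) (n : ℤ) :
    qbinomv qq (m + 1) n = qq ^ n * qbinomv qq m n + qbinomv qq m (n - 1) := by
  rcases eq_or_ne n (m + 1) with rfl | hne
  · rw [qbinomv_of_gt (by omega : m < m + 1)]
    lift m to ℕ using hm with k
    have h1 : ((k : ℤ) + 1) = ((k + 1 : ℕ) : ℤ) := by push_cast; ring
    have h2 : ((k : ℤ) + 1 - 1) = ((k : ℕ) : ℤ) := by push_cast; ring
    rw [h2, h1, qbinomv_self (k + 1), qbinomv_self k]
    ring
  · have hnz : qint qq (m + 1 - n) ≠ 0 := qint_ne_zero (by omega)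
    apply mul_left_cancel₀ hnz
    rw [qbinomv_P1 m hm n, mul_add]
    have hrec : qint qq (m + 1 - n) * qbinomv qq m (n - 1) = qint qq n * qbinomv qq m n := by
      have h : qint qq n * qbinomv qq m n = qint qq (m - n + 1) * qbinomv qq m (n - 1) :=
        qbinomv_rec m hm n
      have e : m + 1 - n = m - n + 1 := by ring
      rw [e, ← h]
    rw [hrec]
    have : qint qq (m + 1) = qint qq n + qq ^ n * qint qq (m + 1 - n) := by
      have := qint_add n (m + 1 - n)
      rw [← this]; congr 1; ring
    rw [this]
    ring

lemma qbase_zero (m : ℤ) : qbase qq m 0 = 1 := by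
  simp [qbase, qfact]

lemma qb_lin (a b c : ℤ) : C (qq ^ b - qq ^ c) * qb qq a =
    C (qq ^ a - qq ^ c) * qb qq b + C (qq ^ b - qq ^ a) * qb qq c := by
  have h1 : (qq ^ b - qq ^ c) * qint qq a =
      (qq ^ a - qq ^ c) * qint qq b + (qq ^ b - qq ^ a) * qint qq c := by
    rw [qint, qint, qint]
    field_simp
    ring
  have h2 : (qq ^ b - qq ^ c) * qq ^ a =
      (qq ^ a - qq ^ c) * qq ^ b + (qq ^ b - qq ^ a) * qq ^ c := by ring
  simp only [qb, mul_add, ← mul_assoc, ← C_mul]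
  rw [h1, h2]
  simp only [C_add, add_mul]
  ring

lemma qb_mul_qbase_succ (m : ℤ) (n : ℕ) :
    qb qq (m + 1) * qbase qq m n = C (qint qq (n + 1)) * qbase qq (m + 1) (n + 1) := by
  rw [qbase, qbase, Finset.prod_range_succ]
  have e1 : ∀ t ∈ range n, qb qq (m + 1 - ((n + 1 : ℕ) : ℤ) + 1 + t) = qb qq (m - n + 1 + t) := by
    intro t _; congr 1; push_cast; ring
  rw [Finset.prod_congr rfl e1]
  have e2 : m + 1 - ((n + 1 : ℕ) : ℤ) + 1 + (n : ℤ) = m + 1 := by push_cast; ring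
  rw [e2]
  have e3 : qfact qq (n + 1) = qfact qq n * qint qq ((n : ℤ) + 1) := by
    rw [qfact, Finset.prod_range_succ, ← qfact]
  rw [e3, mul_inv, C_mul]
  have e4 : C (qint qq ((n : ℤ) + 1)) * C (qint qq ((n : ℤ) + 1))⁻¹ = (1 : Polynomial K) := by
    rw [← C_mul, mul_inv_cancel₀ (qint_ne_zero (by omega)), C_1]
  linear_combination -((∏ i ∈ range n, qb qq (m - n + 1 + i)) * qb qq (m + 1) *
    C (qfact qq n)⁻¹) * e4

lemma qb_mul_qbase_low (m : ℤ) (n : ℕ) :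
    qb qq (m - n) * qbase qq m n = C (qint qq (n + 1)) * qbase qq m (n + 1) := by
  rw [qbase, qbase, Finset.prod_range_succ']
  have e1 : ∀ t ∈ range n, qb qq (m - ((n + 1 : ℕ) : ℤ) + 1 + ((t + 1 : ℕ) : ℤ)) =
      qb qq (m - n + 1 + t) := by
    intro t _; congr 1; push_cast; ring
  rw [Finset.prod_congr rfl e1]
  have e2 : m - ((n + 1 : ℕ) : ℤ) + 1 + ((0 : ℕ) : ℤ) = m - n := by push_cast; ring
  rw [e2]
  have e3 : qfact qq (n + 1) = qfact qq n * qint qq ((n : ℤ) + 1) := by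
    rw [qfact, Finset.prod_range_succ, ← qfact]
  rw [e3, mul_inv, C_mul]
  have e4 : C (qint qq ((n : ℤ) + 1)) * C (qint qq ((n : ℤ) + 1))⁻¹ = (1 : Polynomial K) := by
    rw [← C_mul, mul_inv_cancel₀ (qint_ne_zero (by omega)), C_1]
  linear_combination -((∏ i ∈ range n, qb qq (m - n + 1 + i)) * qb qq (m - n) *
    C (qfact qq n)⁻¹) * e4

lemma qq_zpow_injective {b c : ℤ} (h : b ≠ c) : qq ^ b - qq ^ c ≠ (0 : K) := by
  rw [sub_ne_zero]
  intro h'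
  have h2 : qq ^ (b - c) = (1 : K) := by
    rw [zpow_sub₀ qq_ne_zero, h', div_self (zpow_ne_zero _ qq_ne_zero)]
  exact qq_zpow_ne_one _ (sub_ne_zero.mpr h) h2

lemma qb_mul_qbase (a ℓ : ℤ) (N : ℕ) : qb qq a * qbase qq ℓ N =
    C (qq ^ (a + N - ℓ) * qint qq (ℓ + 1 - a)) * qbase qq ℓ (N + 1) +
    C (qint qq (a + N - ℓ)) * qbase qq (ℓ + 1) (N + 1) := by
  have hq := qq_ne_zero
  have hbc : qq ^ (ℓ - (N : ℤ)) - qq ^ (ℓ + 1) ≠ 0 := qq_zpow_injective (by omega)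
  have s1 : (qq ^ (ℓ - (N : ℤ)) - qq ^ (ℓ + 1)) * (qq ^ (a + N - ℓ) * qint qq (ℓ + 1 - a)) =
      (qq ^ a - qq ^ (ℓ + 1)) * qint qq ((N : ℤ) + 1) := by
    have hA := zpow_ne_zero a hq
    have hL := zpow_ne_zero ℓ hq
    have h1 := qq_sub_one_ne
    simp only [qint, zpow_sub₀ hq, zpow_add₀ hq, zpow_one, zpow_natCast]
    field_simp [hA, hL, h1]
    ring
  have s2 : (qq ^ (ℓ - (N : ℤ)) - qq ^ (ℓ + 1)) * qint qq (a + N - ℓ) =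
      (qq ^ (ℓ - (N : ℤ)) - qq ^ a) * qint qq ((N : ℤ) + 1) := by
    have hA := zpow_ne_zero a hq
    have hL := zpow_ne_zero ℓ hq
    have h1 := qq_sub_one_ne
    simp only [qint, zpow_sub₀ hq, zpow_add₀ hq, zpow_one, zpow_natCast]
    field_simp [hA, hL, h1]
    ring
  have s1' : C (qq ^ (ℓ - (N : ℤ)) - qq ^ (ℓ + 1)) *
      (C (qq ^ (a + N - ℓ)) * C (qint qq (ℓ + 1 - a))) =
      C (qq ^ a - qq ^ (ℓ + 1)) * C (qint qq ((N : ℤ) + 1)) := by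
    rw [← C_mul, ← C_mul, ← C_mul, s1]
  have s2' : C (qq ^ (ℓ - (N : ℤ)) - qq ^ (ℓ + 1)) * C (qint qq (a + N - ℓ)) =
      C (qq ^ (ℓ - (N : ℤ)) - qq ^ a) * C (qint qq ((N : ℤ) + 1)) := by
    rw [← C_mul, ← C_mul, s2]
  have hlow : qb qq (ℓ - (N : ℤ)) * qbase qq ℓ N = C (qint qq ((N : ℤ) + 1)) * qbase qq ℓ (N + 1) :=
    qb_mul_qbase_low ℓ N
  have hsucc : qb qq (ℓ + 1) * qbase qq ℓ N =
      C (qint qq ((N : ℤ) + 1)) * qbase qq (ℓ + 1) (N + 1) := by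
    have := qb_mul_qbase_succ ℓ N
    exact this
  have hlin := qb_lin a (ℓ - (N : ℤ)) (ℓ + 1)
  have hC : (C (qq ^ (ℓ - (N : ℤ)) - qq ^ (ℓ + 1)) : Polynomial K) ≠ 0 :=
    C_ne_zero.mpr hbc
  apply mul_left_cancel₀ hC
  simp only [C_mul]
  linear_combination qbase qq ℓ N * hlin + C (qq ^ a - qq ^ (ℓ + 1)) * hlow +
    C (qq ^ (ℓ - (N : ℤ)) - qq ^ a) * hsucc - qbase qq ℓ (N + 1) * s1' -
    qbase qq (ℓ + 1) (N + 1) * s2'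

def cf (i d j e : ℕ) (ℓ : ℤ) : K :=
  qq ^ ((ℓ - e - i) * (ℓ - d - j)) * qbinomv qq ((d : ℤ) + j - i) (ℓ - i) *
    qbinomv qq ((e : ℤ) + i - j) (ℓ - j)

lemma key1 (i d j e : ℕ) (hid : i ≤ d) (hje : j ≤ e) (ℓ : ℤ) :
    qint qq ((e : ℤ) + 1) * cf i d j (e + 1) ℓ =
      cf i d j e ℓ * (qq ^ ((d : ℤ) + j - ℓ) * qint qq (ℓ + 1 + e - j)) +
      cf i d j e (ℓ - 1) * qint qq ((d : ℤ) + 1 + j - ℓ) := by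
  have hq := qq_ne_zero
  rw [cf, cf, cf]
  push_cast
  rw [show (e : ℤ) + 1 + i - j = ((e : ℤ) + i - j) + 1 by ring]
  rw [qbinomv_pascal ((e : ℤ) + i - j) (by omega) (ℓ - j)]
  rw [show ℓ - 1 - (i : ℤ) = ℓ - i - 1 by ring, show ℓ - 1 - (j : ℤ) = ℓ - j - 1 by ring]
  rw [show (ℓ - (e : ℤ) - i) * (ℓ - d - j) =
      (ℓ - ((e : ℤ) + 1) - i) * (ℓ - d - j) + (ℓ - (d : ℤ) - j) by ring]
  rw [show (ℓ - 1 - (e : ℤ) - i) * (ℓ - 1 - d - j) =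
      (ℓ - ((e : ℤ) + 1) - i) * (ℓ - d - j) + ((e : ℤ) + 1 + i - ℓ) by ring]
  rw [zpow_add₀ hq ((ℓ - ((e : ℤ) + 1) - i) * (ℓ - d - j)) (ℓ - (d : ℤ) - j)]
  rw [zpow_add₀ hq ((ℓ - ((e : ℤ) + 1) - i) * (ℓ - d - j)) ((e : ℤ) + 1 + i - ℓ)]
  have hp3 : qq ^ (ℓ - (d : ℤ) - j) * qq ^ ((d : ℤ) + j - ℓ) = 1 := by
    rw [← zpow_add₀ hq, show (ℓ - (d : ℤ) - j) + ((d : ℤ) + j - ℓ) = 0 by ring, zpow_zero]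
  have e1 : qint qq (ℓ + 1 + (e : ℤ) - j) =
      qint qq (ℓ - j) + qq ^ (ℓ - (j : ℤ)) * qint qq ((e : ℤ) + 1) := by
    have h := qint_add (ℓ - (j : ℤ)) ((e : ℤ) + 1)
    rw [show (ℓ - (j : ℤ)) + ((e : ℤ) + 1) = ℓ + 1 + (e : ℤ) - j by ring] at h
    exact h
  have e2 : qint qq ((e : ℤ) + 1) =
      qint qq ((e : ℤ) + 1 + i - ℓ) + qq ^ ((e : ℤ) + 1 + i - ℓ) * qint qq (ℓ - i) := by
    have h := qint_add ((e : ℤ) + 1 + i - ℓ) (ℓ - (i : ℤ))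
    rw [show ((e : ℤ) + 1 + i - ℓ) + (ℓ - (i : ℤ)) = (e : ℤ) + 1 by ring] at h
    exact h
  have hA := qbinomv_rec ((d : ℤ) + j - i) (by omega) (ℓ - i)
  rw [show ((d : ℤ) + j - i) - (ℓ - i) + 1 = (d : ℤ) + 1 + j - ℓ by ring] at hA
  have hB := qbinomv_rec ((e : ℤ) + i - j) (by omega) (ℓ - j)
  rw [show ((e : ℤ) + i - j) - (ℓ - j) + 1 = (e : ℤ) + 1 + i - ℓ by ring] at hB
  linear_combination
    (-(qq ^ ((ℓ - ((e : ℤ) + 1) - i) * (ℓ - d - j)) * qq ^ (ℓ - (d : ℤ) - j) *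
        qq ^ ((d : ℤ) + j - ℓ) * qbinomv qq ((d : ℤ) + j - i) (ℓ - i) *
        qbinomv qq ((e : ℤ) + i - j) (ℓ - j))) * e1 +
    (-(qq ^ ((ℓ - ((e : ℤ) + 1) - i) * (ℓ - d - j)) * qbinomv qq ((d : ℤ) + j - i) (ℓ - i) *
        qbinomv qq ((e : ℤ) + i - j) (ℓ - j) *
        (qint qq (ℓ - j) + qq ^ (ℓ - (j : ℤ)) * qint qq ((e : ℤ) + 1)))) * hp3 +
    (qq ^ ((ℓ - ((e : ℤ) + 1) - i) * (ℓ - d - j)) * qq ^ ((e : ℤ) + 1 + i - ℓ) *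
        qbinomv qq ((e : ℤ) + i - j) (ℓ - j - 1)) * hA +
    (qq ^ ((ℓ - ((e : ℤ) + 1) - i) * (ℓ - d - j)) * qbinomv qq ((d : ℤ) + j - i) (ℓ - i) *
        qbinomv qq ((e : ℤ) + i - j) (ℓ - j - 1)) * e2 +
    (-(qq ^ ((ℓ - ((e : ℤ) + 1) - i) * (ℓ - d - j)) *
        qbinomv qq ((d : ℤ) + j - i) (ℓ - i))) * hB

lemma key2 (i d e : ℕ) (hid : i ≤ d) (ℓ : ℤ) :
    qint qq ((e : ℤ) + 1) * cf i d (e + 1) (e + 1) ℓ =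
      cf i d e e ℓ * (qq ^ ((d : ℤ) + 2 * e + 1 - ℓ) * qint qq (ℓ - e)) +
      cf i d e e (ℓ - 1) * qint qq ((d : ℤ) + 2 * e + 2 - ℓ) := by
  have hq := qq_ne_zero
  rw [cf, cf, cf]
  push_cast
  rw [show (d : ℤ) + (e + 1) - i = ((d : ℤ) + e - i) + 1 by ring]
  rw [show (e : ℤ) + 1 + i - (e + 1) = (i : ℤ) by ring]
  rw [show (e : ℤ) + i - e = (i : ℤ) by ring]
  rw [qbinomv_pascal ((d : ℤ) + e - i) (by omega) (ℓ - i)]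
  rw [show ℓ - ((e : ℤ) + 1) = ℓ - e - 1 by ring]
  rw [show ℓ - 1 - (i : ℤ) = ℓ - i - 1 by ring, show ℓ - 1 - (e : ℤ) = ℓ - e - 1 by ring]
  rw [show (ℓ - (e : ℤ) - 1 - i) * (ℓ - 1 - d - e) =
      (ℓ - (e : ℤ) - 1 - i) * (ℓ - d - ((e : ℤ) + 1)) by ring]
  rw [show (ℓ - (e : ℤ) - i) * (ℓ - d - e) =
      (ℓ - (e : ℤ) - 1 - i) * (ℓ - d - ((e : ℤ) + 1)) + (2 * ℓ - 2 * e - d - i - 1) by ring]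
  rw [zpow_add₀ hq ((ℓ - (e : ℤ) - 1 - i) * (ℓ - d - ((e : ℤ) + 1))) (2 * ℓ - 2 * (e : ℤ) - d - i - 1)]
  have hp3 : qq ^ (2 * ℓ - 2 * (e : ℤ) - d - i - 1) * qq ^ ((d : ℤ) + 2 * e + 1 - ℓ) =
      qq ^ (ℓ - (i : ℤ)) := by
    rw [← zpow_add₀ hq]; congr 1; ring
  have hp4 : qq ^ (ℓ - (i : ℤ)) * qq ^ ((i : ℤ) + 1 + e - ℓ) = qq ^ ((e : ℤ) + 1) := by
    rw [← zpow_add₀ hq]; congr 1; ring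
  have hB := qbinomv_rec (i : ℤ) (by omega) (ℓ - e)
  rw [show (i : ℤ) - (ℓ - e) + 1 = (i : ℤ) + 1 + e - ℓ by ring] at hB
  have hA := qbinomv_rec ((d : ℤ) + e - i) (by omega) (ℓ - i)
  rw [show ((d : ℤ) + e - i) - (ℓ - i) + 1 = (d : ℤ) + e + 1 - ℓ by ring] at hA
  have e2 : qint qq ((e : ℤ) + 1) =
      qint qq ((i : ℤ) + 1 + e - ℓ) + qq ^ ((i : ℤ) + 1 + e - ℓ) * qint qq (ℓ - i) := by
    have h := qint_add ((i : ℤ) + 1 + e - ℓ) (ℓ - (i : ℤ))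
    rw [show ((i : ℤ) + 1 + e - ℓ) + (ℓ - (i : ℤ)) = (e : ℤ) + 1 by ring] at h
    exact h
  have e3 : qint qq ((d : ℤ) + 2 * e + 2 - ℓ) =
      qint qq ((e : ℤ) + 1) + qq ^ ((e : ℤ) + 1) * qint qq ((d : ℤ) + e + 1 - ℓ) := by
    have h := qint_add ((e : ℤ) + 1) ((d : ℤ) + e + 1 - ℓ)
    rw [show ((e : ℤ) + 1) + ((d : ℤ) + e + 1 - ℓ) = (d : ℤ) + 2 * e + 2 - ℓ by ring] at h
    exact h
  set P : K := qq ^ ((ℓ - (e : ℤ) - 1 - i) * (ℓ - d - ((e : ℤ) + 1))) with hP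
  set A : K := qbinomv qq ((d : ℤ) + e - i) (ℓ - i) with hA1
  set A' : K := qbinomv qq ((d : ℤ) + e - i) (ℓ - i - 1) with hA2
  set Bw : K := qbinomv qq (i : ℤ) (ℓ - e) with hB1
  set Bw' : K := qbinomv qq (i : ℤ) (ℓ - e - 1) with hB2
  linear_combination (-(P * A * Bw * qint qq (ℓ - (e : ℤ)))) * hp3 +
    (-(P * qq ^ (ℓ - (i : ℤ)) * A)) * hB +
    (-(P * A' * Bw')) * e3 +
    (P * Bw' * qq ^ ((e : ℤ) + 1)) * hA +
    (P * qq ^ (ℓ - (i : ℤ)) * A * Bw') * e2 +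
    (P * A * Bw' * qint qq (ℓ - (i : ℤ))) * hp4

lemma cf_bot (i d j e : ℕ) : cf i d j e (-1) = 0 := by
  rw [cf, qbinomv_of_neg (show (-1 : ℤ) - i < 0 by omega)]
  ring

lemma cf_top (i d j e : ℕ) (hid : i ≤ d) : cf i d j e (((d + e : ℕ) : ℤ) + 1) = 0 := by
  rw [cf, qbinomv_of_gt (show ((e : ℤ) + i - j) < ((d + e : ℕ) : ℤ) + 1 - j by push_cast; omega)]
  ring

lemma step (i d j' j e : ℕ) (a : ℤ) (hid : i ≤ d)
    (hIH : qbase qq (i : ℤ) d * qbase qq (j' : ℤ) e =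
      ∑ ℓ ∈ range (d + e + 1), C (cf i d j' e ℓ) * qbase qq (ℓ : ℤ) (d + e))
    (hqb : qb qq a * qbase qq (j' : ℤ) e = C (qint qq ((e : ℤ) + 1)) * qbase qq (j : ℤ) (e + 1))
    (hkey : ∀ ℓ : ℤ, qint qq ((e : ℤ) + 1) * cf i d j (e + 1) ℓ =
      cf i d j' e ℓ * (qq ^ (a + ((d + e : ℕ) : ℤ) - ℓ) * qint qq (ℓ + 1 - a)) +
      cf i d j' e (ℓ - 1) * qint qq (a + ((d + e : ℕ) : ℤ) - (ℓ - 1))) :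
    qbase qq (i : ℤ) d * qbase qq (j : ℤ) (e + 1) =
      ∑ ℓ ∈ range (d + e + 1 + 1), C (cf i d j (e + 1) ℓ) * qbase qq (ℓ : ℤ) (d + e + 1) := by
  have hq1 : qint qq ((e : ℤ) + 1) ≠ 0 := qint_ne_zero (by omega)
  have hC : (C (qint qq ((e : ℤ) + 1)) : Polynomial K) ≠ 0 := C_ne_zero.mpr hq1
  apply mul_left_cancel₀ hC
  have h1 : C (qint qq ((e : ℤ) + 1)) * (qbase qq (i : ℤ) d * qbase qq (j : ℤ) (e + 1)) =
      qb qq a * (qbase qq (i : ℤ) d * qbase qq (j' : ℤ) e) := by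
    linear_combination -(qbase qq (i : ℤ) d * hqb)
  rw [h1, hIH, Finset.mul_sum]
  have h2 : ∀ ℓ ∈ range (d + e + 1),
      qb qq a * (C (cf i d j' e ℓ) * qbase qq (ℓ : ℤ) (d + e)) =
      C (cf i d j' e ℓ * (qq ^ (a + ((d + e : ℕ) : ℤ) - ℓ) * qint qq ((ℓ : ℤ) + 1 - a))) *
        qbase qq (ℓ : ℤ) (d + e + 1) +
      C (cf i d j' e ℓ * qint qq (a + ((d + e : ℕ) : ℤ) - ℓ)) *
        qbase qq ((ℓ : ℤ) + 1) (d + e + 1) := by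
    intro ℓ _
    have h3 : qb qq a * (C (cf i d j' e ℓ) * qbase qq (ℓ : ℤ) (d + e)) =
        C (cf i d j' e ℓ) * (qb qq a * qbase qq (ℓ : ℤ) (d + e)) := by ring
    rw [h3, qb_mul_qbase a (ℓ : ℤ) (d + e)]
    simp only [C_mul]
    ring
  rw [Finset.sum_congr rfl h2, Finset.sum_add_distrib]
  -- extend the first sum
  have hF : ∑ ℓ ∈ range (d + e + 1),
      C (cf i d j' e ℓ * (qq ^ (a + ((d + e : ℕ) : ℤ) - ℓ) * qint qq ((ℓ : ℤ) + 1 - a))) *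
        qbase qq (ℓ : ℤ) (d + e + 1) =
      ∑ ℓ ∈ range (d + e + 1 + 1),
      C (cf i d j' e ℓ * (qq ^ (a + ((d + e : ℕ) : ℤ) - ℓ) * qint qq ((ℓ : ℤ) + 1 - a))) *
        qbase qq (ℓ : ℤ) (d + e + 1) := by
    symm
    have htop : cf i d j' e ((d + e + 1 : ℕ) : ℤ) = 0 := by
      have := cf_top i d j' e hid
      rw [show ((d + e + 1 : ℕ) : ℤ) = ((d + e : ℕ) : ℤ) + 1 by push_cast; ring]
      exact this
    rw [Finset.sum_range_succ, htop]
    simp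
  rw [hF]
  -- reindex the second sum
  have hG : ∑ ℓ ∈ range (d + e + 1),
      C (cf i d j' e ℓ * qint qq (a + ((d + e : ℕ) : ℤ) - ℓ)) *
        qbase qq ((ℓ : ℤ) + 1) (d + e + 1) =
      ∑ ℓ ∈ range (d + e + 1 + 1),
      C (cf i d j' e ((ℓ : ℤ) - 1) * qint qq (a + ((d + e : ℕ) : ℤ) - ((ℓ : ℤ) - 1))) *
        qbase qq (ℓ : ℤ) (d + e + 1) := by
    rw [Finset.sum_range_succ' (fun ℓ : ℕ =>
      C (cf i d j' e ((ℓ : ℤ) - 1) * qint qq (a + ((d + e : ℕ) : ℤ) - ((ℓ : ℤ) - 1))) *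
        qbase qq (ℓ : ℤ) (d + e + 1)) (d + e + 1)]
    have hb : cf i d j' e (((0 : ℕ) : ℤ) - 1) = 0 := by
      rw [show ((0 : ℕ) : ℤ) - 1 = -1 by norm_num]
      exact cf_bot i d j' e
    rw [hb]
    simp only [zero_mul, map_zero, add_zero]
    apply Finset.sum_congr rfl
    intro x _
    have c1 : ((x + 1 : ℕ) : ℤ) - 1 = (x : ℤ) := by push_cast; ring
    have c2 : ((x + 1 : ℕ) : ℤ) = (x : ℤ) + 1 := by push_cast; ring
    rw [c1, c2]
  rw [hG, ← Finset.sum_add_distrib, Finset.mul_sum]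
  apply Finset.sum_congr rfl
  intro ℓ _
  rw [← add_mul, ← C_add, ← hkey (ℓ : ℤ), ← mul_assoc, ← C_mul]

lemma base_case (i d : ℕ) (hid : i ≤ d) :
    qbase qq (i : ℤ) d * qbase qq ((0 : ℕ) : ℤ) 0 =
      ∑ ℓ ∈ range (d + 0 + 1), C (cf i d 0 0 ℓ) * qbase qq (ℓ : ℤ) (d + 0) := by
  rw [qbase_zero, mul_one]
  rw [Finset.sum_eq_single i]
  · have h1 : cf i d 0 0 (i : ℤ) = 1 := by
      rw [cf]
      rw [show ((i : ℤ) - (0 : ℕ) - i) * ((i : ℤ) - d - (0 : ℕ)) = 0 by push_cast; ring,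
        zpow_zero]
      rw [show (i : ℤ) - i = 0 by ring]
      rw [qbinomv_zero (show (0 : ℤ) ≤ (d : ℤ) + (0 : ℕ) - i by push_cast; omega)]
      rw [show ((0 : ℕ) : ℤ) + i - (0 : ℕ) = (i : ℤ) by push_cast; ring,
        show (i : ℤ) - ((0 : ℕ) : ℤ) = (i : ℤ) by push_cast; ring, qbinomv_self i]
      ring
    rw [h1, C_1, one_mul]
    rfl
  · intro b _ hbi
    rcases lt_or_gt_of_ne hbi with hb | hb
    · have h0 : cf i d 0 0 (b : ℤ) = 0 := by
        rw [cf, qbinomv_of_neg (show (b : ℤ) - i < 0 by omega)]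
        ring
      rw [h0, C_0, zero_mul]
    · have h0 : cf i d 0 0 (b : ℤ) = 0 := by
        rw [cf, qbinomv_of_gt (show ((0 : ℕ) : ℤ) + i - (0 : ℕ) < (b : ℤ) - (0 : ℕ) by
          push_cast; omega)]
        ring
      rw [h0, C_0, zero_mul]
  · intro hni
    exact absurd (Finset.mem_range.mpr (by omega)) hni

theorem main_induction : ∀ e j i d : ℕ, i ≤ d → j ≤ e →
    qbase qq (i : ℤ) d * qbase qq (j : ℤ) e =
      ∑ ℓ ∈ range (d + e + 1), C (cf i d j e ℓ) * qbase qq (ℓ : ℤ) (d + e) := by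
  intro e
  induction e with
  | zero =>
    intro j i d hid hje
    obtain rfl : j = 0 := by omega
    exact base_case i d hid
  | succ e ih =>
    intro j i d hid hje
    rcases Nat.lt_or_ge j (e + 1) with hj | hj
    · have hj' : j ≤ e := by omega
      have hqb : qb qq ((j : ℤ) - e) * qbase qq (j : ℤ) e =
          C (qint qq ((e : ℤ) + 1)) * qbase qq (j : ℤ) (e + 1) := qb_mul_qbase_low (j : ℤ) e
      have hkey : ∀ ℓ : ℤ, qint qq ((e : ℤ) + 1) * cf i d j (e + 1) ℓ =
          cf i d j e ℓ * (qq ^ (((j : ℤ) - e) + ((d + e : ℕ) : ℤ) - ℓ) *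
            qint qq (ℓ + 1 - ((j : ℤ) - e))) +
          cf i d j e (ℓ - 1) * qint qq (((j : ℤ) - e) + ((d + e : ℕ) : ℤ) - (ℓ - 1)) := by
        intro ℓ
        rw [show ((j : ℤ) - e) + ((d + e : ℕ) : ℤ) - ℓ = (d : ℤ) + j - ℓ by push_cast; ring,
          show ℓ + 1 - ((j : ℤ) - e) = ℓ + 1 + e - j by ring,
          show ((j : ℤ) - e) + ((d + e : ℕ) : ℤ) - (ℓ - 1) = (d : ℤ) + 1 + j - ℓ by
            push_cast; ring]
        exact key1 i d j e hid hj' ℓ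
      exact step i d j j e ((j : ℤ) - e) hid (ih j i d hid hj') hqb hkey
    · obtain rfl : j = e + 1 := by omega
      have hqb : qb qq ((e : ℤ) + 1) * qbase qq (e : ℤ) e =
          C (qint qq ((e : ℤ) + 1)) * qbase qq ((e + 1 : ℕ) : ℤ) (e + 1) := by
        rw [show ((e + 1 : ℕ) : ℤ) = (e : ℤ) + 1 by push_cast; ring]
        exact qb_mul_qbase_succ (e : ℤ) e
      have hkey : ∀ ℓ : ℤ, qint qq ((e : ℤ) + 1) * cf i d (e + 1) (e + 1) ℓ =
          cf i d e e ℓ * (qq ^ (((e : ℤ) + 1) + ((d + e : ℕ) : ℤ) - ℓ) *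
            qint qq (ℓ + 1 - ((e : ℤ) + 1))) +
          cf i d e e (ℓ - 1) * qint qq (((e : ℤ) + 1) + ((d + e : ℕ) : ℤ) - (ℓ - 1)) := by
        intro ℓ
        rw [show ((e : ℤ) + 1) + ((d + e : ℕ) : ℤ) - ℓ = (d : ℤ) + 2 * e + 1 - ℓ by
            push_cast; ring,
          show ℓ + 1 - ((e : ℤ) + 1) = ℓ - e by ring,
          show ((e : ℤ) + 1) + ((d + e : ℕ) : ℤ) - (ℓ - 1) = (d : ℤ) + 2 * e + 2 - ℓ by
            push_cast; ring]
        exact key2 i d e hid ℓ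
      exact step i d e (e + 1) e ((e : ℤ) + 1) hid (ih e i d hid le_rfl) hqb hkey

theorem qbase_product (i d j e : ℕ) (hid : i ≤ d) (hje : j ≤ e) :
    qbase qq i d * qbase qq j e = ∑ ℓ ∈ range (d + e + 1),
      C (qq ^ ((((ℓ : ℤ) - e - i) * ((ℓ : ℤ) - d - j))) *
        qbinomv qq ((d : ℤ) + j - i) ((ℓ : ℤ) - i) *
        qbinomv qq ((e : ℤ) + i - j) ((ℓ : ℤ) - j)) *
        qbase qq ℓ (d + e) := by
  exact main_induction e j i d hid hje

end
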